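/- arXiv:2507.05210 — 3 statements merged into one kernel-verified Lean document; each statement's English description precedes it below -/
import Mathlib

section
/- Let x̄ ∈ ℝ. Let M, S : ℝ → ℝ be differentiable at every point of (x̄, x̄ + ε₀) for some ε₀ > 0, with the right limits M(x̄⁺) and S(x̄⁺) existing and equal, and with d_M := lim_{x → x̄⁺} M'(x) and d_S := lim_{x → x̄⁺} S'(x) existing and d_S ≠ 0. Set s(x) := S(x) − S(x̄⁺) and θ := sgn(d_S). Let X be a real random variable whose law admits a density f_X with respect to Lebesgue measure that is continuous on (x̄, x̄ + ε₁) for some ε₁ > 0, and such that f₊ := lim_{x → x̄⁺} f_X(x) exists and is strictly positive. Then there exists ε > 0 such that, with I := (x̄, x̄ + ε), one has ℙ(X ∈ I) > 0 and: (i) for every x ∈ I, the conditional CDF G(t) := ℙ(s(X) ≤ t | X ∈ I) is differentiable at t = s(x) with strictly positive derivative g(s(x)) = f_X(x)/(ℙ(X ∈ I)·|s'(x)|); (ii) the limit g₀ := lim_{x → x̄⁺} g(s(x)) exists, is strictly positive, and equals (f₊/ℙ(X ∈ I))/|d_S|; and (iii) lim_{x → x̄⁺} (M(x) − S(x))/(x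 − x̄) = d_M − θ·(f₊/ℙ(X ∈ I))/g₀. -/
open Filter Set Topology MeasureTheory

lemma key_aux (xb ε : ℝ) (f T T' : ℝ → ℝ)
    (hT : ∀ y ∈ Set.Ioo xb (xb+ε), HasDerivAt T (T' y) y)
    (hT' : ∀ y ∈ Set.Ioo xb (xb+ε), 0 < T' y)
    (hfc : ∀ y ∈ Set.Ioo xb (xb+ε), ContinuousAt f y)
    (hfpos : ∀ y ∈ Set.Ioo xb (xb+ε), 0 ≤ f y)
    (hfin : (volume.withDensity fun y => ENNReal.ofReal (f y)) (Set.Ioo xb (xb+ε)) ≠ ⊤)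
    {x : ℝ} (hx : x ∈ Set.Ioo xb (xb+ε)) :
    ∃ w : ℝ → ℝ, w (T x) = x ∧
      (∀ᶠ t in 𝓝 (T x), ({y | y ∈ Set.Ioo xb (xb+ε) ∧ T y ≤ t} = Set.Ioc xb (w t) ∧
         {y | y ∈ Set.Ioo xb (xb+ε) ∧ T y < t} = Set.Ioo xb (w t) ∧
         w t ∈ Set.Ioo xb (xb+ε))) ∧
      HasDerivAt
        (fun t => ((volume.withDensity fun y => ENNReal.ofReal (f y))
          (Set.Ioc xb (w t))).toReal) (f x / T' x) (T x) := by
  set I := Set.Ioo xb (xb+ε) with hI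
  set ν := volume.withDensity fun y => ENNReal.ofReal (f y) with hν
  have hIopen : IsOpen I := isOpen_Ioo
  have hTcont : ContinuousOn T I := fun y hy => (hT y hy).continuousAt.continuousWithinAt
  have hmono : StrictMonoOn T I := by
    apply strictMonoOn_of_deriv_pos (convex_Ioo _ _) hTcont
    intro y hy
    rw [hIopen.interior_eq] at hy
    rw [(hT y hy).deriv]
    exact hT' y hy
  classical
  obtain ⟨hx1, hx2⟩ := hx
  have hx : x ∈ I := ⟨hx1, hx2⟩
  set δ := min (x - xb) (xb + ε - x) / 2 with hδ
  have hδ0 : 0 < δ := by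
    have h1 : 0 < x - xb := by linarith
    have h2 : 0 < xb + ε - x := by linarith
    have := lt_min h1 h2
    positivity
  set a := x - δ with ha
  set b := x + δ with hb
  have hδ1 : δ ≤ (x - xb) / 2 := by
    have := min_le_left (x - xb) (xb + ε - x); rw [hδ]; linarith
  have hδ2 : δ ≤ (xb + ε - x) / 2 := by
    have := min_le_right (x - xb) (xb + ε - x); rw [hδ]; linarith
  have hxba : xb < a := by rw [ha]; linarith
  have hax : a < x := by rw [ha]; linarith
  have hxb' : x < b := by rw [hb]; linarith
  have hbε : b < xb + ε := by rw [hb]; linarith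
  have hab : a < b := lt_trans hax hxb'
  have hIccI : Set.Icc a b ⊆ I := fun y hy => ⟨lt_of_lt_of_le hxba hy.1, lt_of_le_of_lt hy.2 hbε⟩
  have haI : a ∈ I := hIccI ⟨le_refl a, le_of_lt hab⟩
  have hbI : b ∈ I := hIccI ⟨le_of_lt hab, le_refl b⟩
  -- the inverse function w
  have hivt : ∀ t ∈ Set.Icc (T a) (T b), ∃ y, y ∈ Set.Icc a b ∧ T y = t := by
    intro t ht
    have := intermediate_value_Icc (le_of_lt hab) (hTcont.mono hIccI)
    obtain ⟨y, hy, hyt⟩ := this ht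
    exact ⟨y, hy, hyt⟩
  set w : ℝ → ℝ := fun t => if h : ∃ y, y ∈ Set.Icc a b ∧ T y = t then h.choose else x with hw
  have hwspec : ∀ t ∈ Set.Icc (T a) (T b), w t ∈ Set.Icc a b ∧ T (w t) = t := by
    intro t ht
    have h := hivt t ht
    rw [hw]; simp only [dif_pos h]
    exact h.choose_spec
  have hTax : T a < T x := hmono haI hx hax
  have hTxb : T x < T b := hmono hx hbI hxb'
  have hwTx : w (T x) = x := by
    have hmem : T x ∈ Set.Icc (T a) (T b) := ⟨le_of_lt hTax, le_of_lt hTxb⟩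
    obtain ⟨hw1, hw2⟩ := hwspec _ hmem
    exact hmono.injOn (hIccI hw1) hx hw2
  have hnhds : Set.Ioo (T a) (T b) ∈ 𝓝 (T x) := Ioo_mem_nhds hTax hTxb
  -- set identities
  have hsets : ∀ t ∈ Set.Ioo (T a) (T b),
      ({y | y ∈ I ∧ T y ≤ t} = Set.Ioc xb (w t) ∧
       {y | y ∈ I ∧ T y < t} = Set.Ioo xb (w t) ∧ w t ∈ I) := by
    intro t ht
    obtain ⟨hw1, hw2⟩ := hwspec t ⟨le_of_lt ht.1, le_of_lt ht.2⟩
    have hwI : w t ∈ I := hIccI hw1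
    refine ⟨?_, ?_, hwI⟩
    · ext y
      simp only [Set.mem_setOf_eq, Set.mem_Ioc]
      constructor
      · rintro ⟨hyI, hyt⟩
        refine ⟨hyI.1, ?_⟩
        rw [← hw2] at hyt
        exact (hmono.le_iff_le hyI hwI).mp hyt
      · rintro ⟨h1, h2⟩
        have hyI : y ∈ I := ⟨h1, lt_of_le_of_lt (le_trans h2 hw1.2) hbε⟩
        exact ⟨hyI, hw2 ▸ (hmono.le_iff_le hyI hwI).mpr h2⟩
    · ext y
      simp only [Set.mem_setOf_eq, Set.mem_Ioo]
      constructor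
      · rintro ⟨hyI, hyt⟩
        refine ⟨hyI.1, ?_⟩
        rw [← hw2] at hyt
        exact (hmono.lt_iff_lt hyI hwI).mp hyt
      · rintro ⟨h1, h2⟩
        have hyI : y ∈ I := ⟨h1, lt_of_lt_of_le (lt_of_lt_of_le h2 hw1.2) (le_of_lt hbε)⟩
        exact ⟨hyI, hw2 ▸ (hmono.lt_iff_lt hyI hwI).mpr h2⟩
  -- continuity of w at T x
  have hwcont : ContinuousAt w (T x) := by
    rw [ContinuousAt, hwTx]
    rw [tendsto_order]
    constructor
    · intro l hl
      set a' := max a l with ha'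
      have ha'x : a' < x := max_lt hax hl
      have ha'I : a' ∈ I := ⟨lt_of_lt_of_le hxba (le_max_left _ _), lt_trans ha'x hx2⟩
      have hTa' : T a' < T x := hmono ha'I hx ha'x
      have haa' : T a ≤ T a' := (hmono.le_iff_le haI ha'I).mpr (le_max_left _ _)
      filter_upwards [Ioo_mem_nhds hTa' hTxb] with t ht
      have htI : t ∈ Set.Ioo (T a) (T b) := ⟨lt_of_le_of_lt haa' ht.1, ht.2⟩
      obtain ⟨hw1, hw2⟩ := hwspec t ⟨le_of_lt htI.1, le_of_lt htI.2⟩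
      have hwI : w t ∈ I := hIccI hw1
      have : a' < w t := by
        have := ht.1
        rw [← hw2] at this
        exact (hmono.lt_iff_lt ha'I hwI).mp this
      exact lt_of_le_of_lt (le_max_right a l) this
    · intro u hu
      set b' := min b u with hb'
      have hxb'' : x < b' := lt_min hxb' hu
      have hb'I : b' ∈ I := ⟨lt_trans hx1 hxb'', lt_of_le_of_lt (min_le_left _ _) hbε⟩
      have hTb' : T x < T b' := hmono hx hb'I hxb''
      have hbb' : T b' ≤ T b := (hmono.le_iff_le hb'I hbI).mpr (min_le_left _ _)
      filter_upwards [Ioo_mem_nhds hTax hTb'] with t ht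
      have htI : t ∈ Set.Ioo (T a) (T b) := ⟨ht.1, lt_of_lt_of_le ht.2 hbb'⟩
      obtain ⟨hw1, hw2⟩ := hwspec t ⟨le_of_lt htI.1, le_of_lt htI.2⟩
      have hwI : w t ∈ I := hIccI hw1
      have : w t < b' := by
        have := ht.2
        rw [← hw2] at this
        exact (hmono.lt_iff_lt hwI hb'I).mp this
      exact lt_of_lt_of_le this (min_le_right b u)
  -- derivative of w
  have hT'x : T' x ≠ 0 := ne_of_gt (hT' x hx)
  have hwderiv : HasDerivAt w (T' x)⁻¹ (T x) := by
    have h0 : HasDerivAt T (T' x) (w (T x)) := by rw [hwTx]; exact hT x hx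
    apply HasDerivAt.of_local_left_inverse hwcont h0 hT'x
    filter_upwards [hnhds] with t ht
    exact (hwspec t ⟨le_of_lt ht.1, le_of_lt ht.2⟩).2
  -- the CDF function F
  set fp : ℝ → ℝ := fun y => max (f y) 0 with hfp
  have hofReal : ∀ y, ENNReal.ofReal (f y) = ENNReal.ofReal (fp y) := by
    intro y
    rcases le_or_gt (f y) 0 with h | h
    · rw [ENNReal.ofReal_of_nonpos h, hfp]
      simp [max_eq_right h]
    · rw [hfp]; simp [max_eq_left (le_of_lt h)]
  have hfpc : ∀ y ∈ I, ContinuousAt fp y := fun y hy => (hfc y hy).max continuousAt_const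
  have hfpcI : ContinuousOn fp I := fun y hy => (hfpc y hy).continuousWithinAt
  set F : ℝ → ℝ := fun y => (ν (Set.Ioc xb y)).toReal with hF
  have hsubI : ∀ y ∈ Set.Ioo a (xb + ε), Set.Ioc a y ⊆ I := fun y hy z hz =>
    ⟨lt_of_lt_of_le hxba (le_of_lt hz.1), lt_of_le_of_lt hz.2 hy.2⟩
  have hFeq : ∀ y ∈ Set.Ioo a (xb + ε), F y = F a + ∫ u in a..y, fp u := by
    intro y hy
    have hay : a ≤ y := le_of_lt hy.1
    have hsplit : Set.Ioc xb y = Set.Ioc xb a ∪ Set.Ioc a y :=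
      (Set.Ioc_union_Ioc_eq_Ioc (le_of_lt hxba) hay).symm
    have hdisj : Disjoint (Set.Ioc xb a) (Set.Ioc a y) := Set.Ioc_disjoint_Ioc_of_le le_rfl
    have hmeasu : ν (Set.Ioc xb y) = ν (Set.Ioc xb a) + ν (Set.Ioc a y) := by
      rw [hsplit, measure_union hdisj measurableSet_Ioc]
    have hfin1 : ν (Set.Ioc xb a) ≠ ⊤ :=
      ne_top_of_le_ne_top hfin (measure_mono (fun z hz => ⟨hz.1, lt_of_le_of_lt hz.2 (lt_trans hax hx2)⟩))
    have hfin2 : ν (Set.Ioc a y) ≠ ⊤ := ne_top_of_le_ne_top hfin (measure_mono (hsubI y hy))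
    have hint : (ν (Set.Ioc a y)).toReal = ∫ u in a..y, fp u := by
      rw [intervalIntegral.integral_of_le hay]
      rw [hν, withDensity_apply _ measurableSet_Ioc]
      have h1 : ∫⁻ u in Set.Ioc a y, ENNReal.ofReal (f u) =
          ∫⁻ u in Set.Ioc a y, ENNReal.ofReal (fp u) := lintegral_congr fun u => hofReal u
      have h2 : IntegrableOn fp (Set.Ioc a y) volume := by
        have hIcc : Set.Icc a y ⊆ I := fun z hz =>
          ⟨lt_of_lt_of_le hxba hz.1, lt_of_le_of_lt hz.2 hy.2⟩
        exact ((hfpcI.mono hIcc).integrableOn_Icc).mono_set Set.Ioc_subset_Icc_self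
      have h3 := MeasureTheory.ofReal_integral_eq_lintegral_ofReal h2
        (Filter.Eventually.of_forall fun u => le_max_right _ _)
      rw [h1, ← h3, ENNReal.toReal_ofReal]
      exact MeasureTheory.integral_nonneg fun u => le_max_right _ _
    rw [hF]
    simp only
    rw [hmeasu, ENNReal.toReal_add hfin1 hfin2, hint]
  have hintegrable : IntervalIntegrable fp volume a x := by
    apply ContinuousOn.intervalIntegrable
    apply hfpcI.mono
    rw [Set.uIcc_of_le (le_of_lt hax)]
    exact fun z hz => hIccI ⟨hz.1, le_trans hz.2 (le_of_lt hxb')⟩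
  have hsmf : StronglyMeasurableAtFilter fp (𝓝 x) :=
    ⟨I, hIopen.mem_nhds hx, hfpcI.aestronglyMeasurable hIopen.measurableSet⟩
  have hder0 : HasDerivAt (fun y => ∫ u in a..y, fp u) (fp x) x :=
    intervalIntegral.integral_hasDerivAt_right hintegrable hsmf (hfpc x hx)
  have hFder : HasDerivAt F (f x) x := by
    have h1 : HasDerivAt (fun y => F a + ∫ u in a..y, fp u) (fp x) x := hder0.const_add (F a)
    have h2 : F =ᶠ[𝓝 x] fun y => F a + ∫ u in a..y, fp u :=
      Filter.eventuallyEq_of_mem (Ioo_mem_nhds hax hx2) (fun y hy => hFeq y hy)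
    have h3 := h1.congr_of_eventuallyEq h2
    have hfpx : fp x = f x := max_eq_left (hfpos x hx)
    rwa [hfpx] at h3
  have hFw : HasDerivAt F (f x) (w (T x)) := by rw [hwTx]; exact hFder
  have hcomp : HasDerivAt (fun t => F (w t)) (f x * (T' x)⁻¹) (T x) :=
    HasDerivAt.comp (T x) hFw hwderiv
  refine ⟨w, hwTx, ?_, ?_⟩
  · filter_upwards [hnhds] with t ht using hsets t ht
  · rw [div_eq_mul_inv]
    exact hcomp

/-- Identification of the average marginal effect near the bunching point `xb`.
`M` is the regression function, `S` the counterfactual function (with `s x = S x - Sp` the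
selection function), `X` the treatment with density `f_X` near `xb`.  There is an `ε > 0`
such that, with `I = (xb, xb + ε)`: the conditional CDF of `s (X)` given `X ∈ I` is
differentiable at `s x` for `x ∈ I` with positive derivative `g (s x) =
f_X x / (ℙ(X ∈ I) * |S' x|)`; the limit `g₀` of `g (s x)` as `x ↓ xb` exists, is positive and
equals `(f₊ / ℙ(X ∈ I)) / |dS|`; and the average marginal effect equals
`dM - sgn dS * (f₊ / ℙ(X ∈ I)) / g₀`. -/
theorem stmt4 {Ω : Type*} [MeasurableSpace Ω] (P : Measure Ω) [IsProbabilityMeasure P]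
    (xb : ℝ) (M S M' S' : ℝ → ℝ) (ε₀ : ℝ) (hε₀ : 0 < ε₀)
    (hM : ∀ x ∈ Set.Ioo xb (xb + ε₀), HasDerivAt M (M' x) x)
    (hS : ∀ x ∈ Set.Ioo xb (xb + ε₀), HasDerivAt S (S' x) x)
    (Mp Sp dM dS : ℝ)
    (hMp : Tendsto M (𝓝[>] xb) (𝓝 Mp))
    (hSp : Tendsto S (𝓝[>] xb) (𝓝 Sp))
    (hlim_eq : Mp = Sp)
    (hdM : Tendsto M' (𝓝[>] xb) (𝓝 dM))
    (hdS : Tendsto S' (𝓝[>] xb) (𝓝 dS))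
    (hdS0 : dS ≠ 0)
    (X : Ω → ℝ) (hX : Measurable X)
    (f_X : ℝ → ℝ) (ε₁ : ℝ) (hε₁ : 0 < ε₁)
    (hdens : Measure.map X P = volume.withDensity fun x => ENNReal.ofReal (f_X x))
    (hfc : ContinuousOn f_X (Set.Ioo xb (xb + ε₁)))
    (fplus : ℝ) (hfplus : Tendsto f_X (𝓝[>] xb) (𝓝 fplus)) (hfpos : 0 < fplus) :
    ∃ ε : ℝ, 0 < ε ∧
      0 < (P (X ⁻¹' Set.Ioo xb (xb + ε))).toReal ∧
      (∀ x ∈ Set.Ioo xb (xb + ε),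
        HasDerivAt
          (fun t => (P {ω | S (X ω) - Sp ≤ t ∧ X ω ∈ Set.Ioo xb (xb + ε)}).toReal /
            (P (X ⁻¹' Set.Ioo xb (xb + ε))).toReal)
          (f_X x / ((P (X ⁻¹' Set.Ioo xb (xb + ε))).toReal * |S' x|)) (S x - Sp) ∧
        0 < f_X x / ((P (X ⁻¹' Set.Ioo xb (xb + ε))).toReal * |S' x|)) ∧
      Tendsto (fun x => f_X x / ((P (X ⁻¹' Set.Ioo xb (xb + ε))).toReal * |S' x|))
        (𝓝[>] xb)
        (𝓝 ((fplus / (P (X ⁻¹' Set.Ioo xb (xb + ε))).toReal) / |dS|)) ∧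
      0 < (fplus / (P (X ⁻¹' Set.Ioo xb (xb + ε))).toReal) / |dS| ∧
      Tendsto (fun x => (M x - S x) / (x - xb)) (𝓝[>] xb)
        (𝓝 (dM - Real.sign dS * (fplus / (P (X ⁻¹' Set.Ioo xb (xb + ε))).toReal) /
          ((fplus / (P (X ⁻¹' Set.Ioo xb (xb + ε))).toReal) / |dS|))) := by
  classical
  have hdSabs : 0 < |dS| := abs_pos.mpr hdS0
  -- eventual facts near xb from the right
  have hev1 : ∀ᶠ x in 𝓝[>] xb, fplus/2 < f_X x :=
    hfplus.eventually (eventually_gt_nhds (by linarith))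
  have hev2 : ∀ᶠ x in 𝓝[>] xb, |S' x - dS| < |dS|/2 := by
    have := Metric.tendsto_nhds.mp hdS (|dS|/2) (by positivity)
    simpa [Real.dist_eq] using this
  obtain ⟨u, hu, hsub⟩ := mem_nhdsGT_iff_exists_Ioo_subset.mp (hev1.and hev2)
  rw [Set.mem_Ioi] at hu
  set ε := min (min ε₀ ε₁) (u - xb) with hεdef
  have hεpos : 0 < ε := by
    rw [hεdef]
    exact lt_min (lt_min hε₀ hε₁) (by linarith)
  set I := Set.Ioo xb (xb + ε) with hIdef
  have hε0' : ε ≤ ε₀ := le_trans (min_le_left _ _) (min_le_left _ _)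
  have hε1' : ε ≤ ε₁ := le_trans (min_le_left _ _) (min_le_right _ _)
  have hIsub0 : I ⊆ Set.Ioo xb (xb + ε₀) :=
    Set.Ioo_subset_Ioo le_rfl (by linarith)
  have hIsub1 : I ⊆ Set.Ioo xb (xb + ε₁) :=
    Set.Ioo_subset_Ioo le_rfl (by linarith)
  have hIsubu : I ⊆ Set.Ioo xb u := by
    apply Set.Ioo_subset_Ioo le_rfl
    have := min_le_right (min ε₀ ε₁) (u - xb)
    rw [hεdef]; linarith
  have hprop : ∀ x ∈ I, fplus/2 < f_X x ∧ |S' x - dS| < |dS|/2 := fun x hx => hsub (hIsubu hx)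
  have hfXpos : ∀ x ∈ I, 0 < f_X x := fun x hx => lt_trans (by linarith) (hprop x hx).1
  have hfXcont : ∀ x ∈ I, ContinuousAt f_X x := fun x hx =>
    hfc.continuousAt (isOpen_Ioo.mem_nhds (hIsub1 hx))
  have hS'abs : ∀ x ∈ I, |dS|/2 < |S' x| := by
    intro x hx
    have h := (hprop x hx).2
    have h2 : |dS| - |S' x| ≤ |S' x - dS| := by
      have := abs_sub_abs_le_abs_sub dS (S' x)
      rwa [abs_sub_comm] at this
    linarith
  have hS'ne : ∀ x ∈ I, S' x ≠ 0 := by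
    intro x hx
    have := hS'abs x hx
    intro h; rw [h] at this; simp at this; linarith
  -- measure facts
  set ν := volume.withDensity fun y => ENNReal.ofReal (f_X y) with hνdef
  have hPmap : ∀ A : Set ℝ, MeasurableSet A → P (X ⁻¹' A) = ν A := by
    intro A hA
    rw [← Measure.map_apply hX hA, hdens]
  have hνI : P (X ⁻¹' I) = ν I := hPmap I measurableSet_Ioo
  have hfinI : ν I ≠ ⊤ := hνI ▸ measure_ne_top P _
  have hνIpos : 0 < ν I := by
    have hlb : ENNReal.ofReal (fplus/2) * volume I ≤ ν I := by
      rw [hνdef, withDensity_apply _ measurableSet_Ioo, ← setLIntegral_const]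
      apply lintegral_mono_ae
      rw [ae_restrict_iff' measurableSet_Ioo]
      filter_upwards with y hy
      exact ENNReal.ofReal_le_ofReal (le_of_lt (hprop y hy).1)
    refine lt_of_lt_of_le ?_ hlb
    apply ENNReal.mul_pos
    · simp [ENNReal.ofReal_pos]; linarith
    · rw [hIdef, Real.volume_Ioo]
      simp [ENNReal.ofReal_pos]; linarith
  set c := (P (X ⁻¹' I)).toReal with hcdef
  have hcpos : 0 < c := ENNReal.toReal_pos (by rw [hνI]; exact ne_of_gt hνIpos) (measure_ne_top P _)
  have hcν : (ν I).toReal = c := by rw [hcdef, hνI]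
  refine ⟨ε, hεpos, hcpos, ?_, ?_, ?_, ?_⟩
  · -- the conditional CDF derivative
    intro x hx
    have hS'x := hS'ne x hx
    have hfx := hfXpos x hx
    constructor
    · -- HasDerivAt
      rcases hdS0.lt_or_gt with hneg | hpos
      · -- decreasing case : use T = -S
        have hS'neg : ∀ y ∈ I, S' y < 0 := by
          intro y hy
          have h := (hprop y hy).2
          rw [abs_lt] at h
          rw [abs_of_neg hneg] at h
          linarith [h.2]
        obtain ⟨w, hwTx, hev, hder⟩ := key_aux xb ε f_X (fun y => -S y) (fun y => -S' y)
          (fun y hy => (hS y (hIsub0 hy)).neg)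
          (fun y hy => by simpa using neg_pos.mpr (hS'neg y hy))
          hfXcont (fun y hy => le_of_lt (hfXpos y hy)) hfinI hx
        -- inner map t ↦ -(t + Sp)
        have hm : HasDerivAt (fun t : ℝ => -(t + Sp)) (-1) (S x - Sp) := by
          exact ((hasDerivAt_id (S x - Sp)).add_const Sp).neg
        have hder' : HasDerivAt (fun t => (ν (Set.Ioc xb (w t))).toReal)
            (f_X x / (-S' x)) (-(S x - Sp + Sp)) := by
          rw [sub_add_cancel]; exact hder
        have h1 : HasDerivAt (fun t => (ν (Set.Ioc xb (w (-(t + Sp))))).toReal)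
            (f_X x / (-S' x) * (-1)) (S x - Sp) := by
            have := HasDerivAt.comp (S x - Sp) hder' hm; exact this
        have h2 : HasDerivAt (fun t => c - (ν (Set.Ioc xb (w (-(t + Sp))))).toReal)
            (f_X x / (-S' x)) (S x - Sp) := by
          have := h1.const_sub c
          simpa using this
        have htend : Tendsto (fun t : ℝ => -(t + Sp)) (𝓝 (S x - Sp)) (𝓝 (-S x)) := by
          have : Tendsto (fun t : ℝ => -(t + Sp)) (𝓝 (S x - Sp)) (𝓝 (-(S x - Sp + Sp))) :=
            ((continuous_id.add continuous_const).neg).tendsto _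
          rwa [sub_add_cancel] at this
        have hev' : ∀ᶠ t in 𝓝 (S x - Sp),
            (P {ω | S (X ω) - Sp ≤ t ∧ X ω ∈ I}).toReal =
            c - (ν (Set.Ioc xb (w (-(t + Sp))))).toReal := by
          filter_upwards [htend.eventually hev] with t ht
          obtain ⟨hset1, hset2, hwmem⟩ := ht
          have hseteq : {ω | S (X ω) - Sp ≤ t ∧ X ω ∈ I} =
              X ⁻¹' Set.Ico (w (-(t + Sp))) (xb + ε) := by
            ext ω
            simp only [Set.mem_setOf_eq, Set.mem_preimage, Set.mem_Ico]
            constructor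
            · rintro ⟨hle, hXI⟩
              refine ⟨?_, hXI.2⟩
              by_contra hcon
              push_neg at hcon
              have hmem : X ω ∈ Set.Ioo xb (w (-(t + Sp))) := ⟨hXI.1, hcon⟩
              rw [← hset2] at hmem
              simp only [Set.mem_setOf_eq] at hmem
              obtain ⟨_, hlt⟩ := hmem
              linarith
            · rintro ⟨hge, hlt⟩
              have hXI : X ω ∈ I := ⟨lt_of_lt_of_le hwmem.1 hge, hlt⟩
              refine ⟨?_, hXI⟩
              have hnot : X ω ∉ Set.Ioo xb (w (-(t + Sp))) :=
                fun hcon => absurd hcon.2 (not_lt.mpr hge)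
              rw [← hset2] at hnot
              simp only [Set.mem_setOf_eq, not_and, not_lt] at hnot
              have := hnot hXI
              linarith
          rw [hseteq, hPmap _ measurableSet_Ico]
          -- ν (Ico (w u) (xb+ε)) = ν I - ν (Ioo xb (w u))
          have hwu := hwmem
          have hsplit : Set.Ioo xb (w (-(t + Sp))) ∪ Set.Ico (w (-(t + Sp))) (xb + ε) = I :=
            Set.Ioo_union_Ico_eq_Ioo hwu.1 (le_of_lt hwu.2)
          have hdisj : Disjoint (Set.Ioo xb (w (-(t + Sp)))) (Set.Ico (w (-(t + Sp))) (xb + ε)) :=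
            Set.disjoint_left.mpr fun z hz hz' => absurd hz.2 (not_lt.mpr hz'.1)
          have hadd : ν (Set.Ioo xb (w (-(t + Sp)))) + ν (Set.Ico (w (-(t + Sp))) (xb + ε)) = ν I := by
            rw [← measure_union hdisj measurableSet_Ico, hsplit]
          have hIoo_Ioc : ν (Set.Ioo xb (w (-(t + Sp)))) = ν (Set.Ioc xb (w (-(t + Sp)))) := by
            apply measure_congr
            apply Ioo_ae_eq_Ioc' 
            exact (withDensity_absolutelyContinuous volume _) (Real.volume_singleton)
          have hf1 : ν (Set.Ioo xb (w (-(t + Sp)))) ≠ ⊤ :=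
            ne_top_of_le_ne_top hfinI (measure_mono (fun z hz => ⟨hz.1, lt_trans hz.2 hwu.2⟩))
          have hf2 : ν (Set.Ico (w (-(t + Sp))) (xb + ε)) ≠ ⊤ :=
            ne_top_of_le_ne_top hfinI (measure_mono (fun z hz => ⟨lt_of_lt_of_le hwu.1 hz.1, hz.2⟩))
          have htoReal := congrArg ENNReal.toReal hadd
          rw [ENNReal.toReal_add hf1 hf2, hcν] at htoReal
          rw [← hIoo_Ioc]
          linarith
        have h3 := (h2.congr_of_eventuallyEq hev').div_const c
        have habs : |S' x| = -S' x := abs_of_neg (hS'neg x hx)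
        rw [habs]
        rw [show f_X x / (c * -S' x) = f_X x / -S' x / c by rw [div_div, mul_comm]]
        exact h3
      · -- increasing case
        have hS'pos : ∀ y ∈ I, 0 < S' y := by
          intro y hy
          have h := (hprop y hy).2
          rw [abs_lt] at h
          rw [abs_of_pos hpos] at h
          linarith [h.1]
        obtain ⟨w, hwTx, hev, hder⟩ := key_aux xb ε f_X S S'
          (fun y hy => hS y (hIsub0 hy)) hS'pos
          hfXcont (fun y hy => le_of_lt (hfXpos y hy)) hfinI hx
        have hm : HasDerivAt (fun t : ℝ => t + Sp) 1 (S x - Sp) :=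
          (hasDerivAt_id (S x - Sp)).add_const Sp
        have hder' : HasDerivAt (fun t => (ν (Set.Ioc xb (w t))).toReal)
            (f_X x / S' x) (S x - Sp + Sp) := by
          rw [sub_add_cancel]; exact hder
        have h1 : HasDerivAt (fun t => (ν (Set.Ioc xb (w (t + Sp)))).toReal)
            (f_X x / S' x) (S x - Sp) := by
          have := HasDerivAt.comp (S x - Sp) hder' hm
          rw [mul_one] at this; exact this
        have htend : Tendsto (fun t : ℝ => t + Sp) (𝓝 (S x - Sp)) (𝓝 (S x)) := by
          have : Tendsto (fun t : ℝ => t + Sp) (𝓝 (S x - Sp)) (𝓝 (S x - Sp + Sp)) :=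
            (continuous_id.add continuous_const).tendsto _
          rwa [sub_add_cancel] at this
        have hev' : ∀ᶠ t in 𝓝 (S x - Sp),
            (P {ω | S (X ω) - Sp ≤ t ∧ X ω ∈ I}).toReal =
            (ν (Set.Ioc xb (w (t + Sp)))).toReal := by
          filter_upwards [htend.eventually hev] with t ht
          obtain ⟨hset1, hset2, hwmem⟩ := ht
          have hseteq : {ω | S (X ω) - Sp ≤ t ∧ X ω ∈ I} = X ⁻¹' Set.Ioc xb (w (t + Sp)) := by
            ext ω
            simp only [Set.mem_setOf_eq, Set.mem_preimage]
            rw [← hset1]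
            simp only [Set.mem_setOf_eq]
            constructor
            · rintro ⟨h1', h2'⟩; exact ⟨h2', by linarith⟩
            · rintro ⟨h1', h2'⟩; exact ⟨by linarith, h1'⟩
          rw [hseteq, hPmap _ measurableSet_Ioc]
        have h3 := (h1.congr_of_eventuallyEq hev').div_const c
        have habs : |S' x| = S' x := abs_of_pos (hS'pos x hx)
        rw [habs]
        rw [show f_X x / (c * S' x) = f_X x / S' x / c by rw [div_div, mul_comm]]
        exact h3
    · -- positivity
      exact div_pos hfx (mul_pos hcpos (abs_pos.mpr hS'x))
  · -- tendsto of g ∘ s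
    have hden : Tendsto (fun x => c * |S' x|) (𝓝[>] xb) (𝓝 (c * |dS|)) :=
      (hdS.abs).const_mul c
    have := hfplus.div hden (by positivity)
    convert this using 2
    rfl
    rw [div_div]
  · exact div_pos (div_pos hfpos hcpos) hdSabs
  · -- l'hopital
    have hval : dM - Real.sign dS * (fplus / c) / ((fplus / c) / |dS|) = dM - dS := by
      have hk : fplus / c ≠ 0 := ne_of_gt (div_pos hfpos hcpos)
      have h1 : Real.sign dS * (fplus / c) / ((fplus / c) / |dS|) = Real.sign dS * |dS| := by
        field_simp
      rw [h1]
      rcases hdS0.lt_or_gt with h | h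
      · rw [Real.sign_of_neg h, abs_of_neg h]; ring
      · rw [Real.sign_of_pos h, abs_of_pos h]; ring
    rw [hval]
    have hlh := HasDerivAt.lhopital_zero_right_on_Ioo (a := xb) (b := xb + ε₀)
      (f := fun x => M x - S x) (f' := fun x => M' x - S' x)
      (g := fun x => x - xb) (g' := fun _ => (1:ℝ)) (by linarith)
      (fun x hx => (hM x hx).sub (hS x hx))
      (fun x hx => (hasDerivAt_id x).sub_const xb)
      (fun x _ => one_ne_zero)
      (by have := hMp.sub hSp; rw [hlim_eq, sub_self] at this; exact this)
      (by
        have : Tendsto (fun x : ℝ => x - xb) (𝓝 xb) (𝓝 (xb - xb)) :=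
          (continuous_id.sub continuous_const).tendsto xb
        rw [sub_self] at this
        exact this.mono_left nhdsWithin_le_nhds)
      (by simpa using hdM.sub hdS)
    exact hlh
end

section
/- Let (Ω, ℱ, ℙ) be a probability space, X* : Ω → ℝ a random variable, and x̄ ∈ ℝ with ℙ(X* ≤ x̄) > 0 and ℙ(X* < x̄) > 0. Let θ ∈ {−1, +1} and let s : ℝ → ℝ be measurable with s(x̄) = 0, with s(X*)·1{X* ≤ x̄} integrable, and such that θ·s(x) < 0 for every x < x̄. Let y₀ ∈ ℝ and let Y : Ω → ℝ be integrable with E[(Y − y₀ − s(X*))·1{X* ≤ x̄}] = 0. Then sgn( y₀ − E[Y·1{X* ≤ x̄}]/ℙ(X* ≤ x̄) ) = θ. -/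
open Filter Set Topology MeasureTheory

/-- Identification of the sign of the selection bias: in the bunching model the treatment is
`X = max (X*, xb)`, so the event `{X = xb}` is `{X* ≤ xb}`.  If the selection function `s`
vanishes at `xb` and satisfies `θ * s x < 0` for all `x < xb` (with `θ ∈ {−1, +1}`), and the
outcome `Y` satisfies `E[(Y − y₀ − s (X*))·1{X* ≤ xb}] = 0`, then
`sgn (y₀ − E[Y·1{X* ≤ xb}] / ℙ(X* ≤ xb)) = θ`. -/
theorem stmt5 {Ω : Type*} [MeasurableSpace Ω] (P : Measure Ω) [IsProbabilityMeasure P]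
    (Xstar : Ω → ℝ) (hXstar : Measurable Xstar) (xb : ℝ)
    (hple : 0 < P {ω | Xstar ω ≤ xb}) (hplt : 0 < P {ω | Xstar ω < xb})
    (θ : ℝ) (hθ : θ = 1 ∨ θ = -1)
    (s : ℝ → ℝ) (hs : Measurable s) (hsxb : s xb = 0)
    (hint : Integrable ({ω | Xstar ω ≤ xb}.indicator fun ω => s (Xstar ω)) P)
    (hsign : ∀ x < xb, θ * s x < 0)
    (y₀ : ℝ) (Y : Ω → ℝ) (hY : Integrable Y P)
    (hmean : ∫ ω, ({ω | Xstar ω ≤ xb}.indicator fun ω => Y ω - y₀ - s (Xstar ω)) ω ∂P = 0) :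
    Real.sign (y₀ -
      (∫ ω, ({ω | Xstar ω ≤ xb}.indicator Y) ω ∂P) / (P {ω | Xstar ω ≤ xb}).toReal) = θ := by
  set A : Set Ω := {ω | Xstar ω ≤ xb} with hA
  have hAm : MeasurableSet A := hXstar measurableSet_Iic
  set p : ℝ := (P A).toReal with hp
  have hp0 : 0 < p := ENNReal.toReal_pos hple.ne' (measure_ne_top P A)
  have hYind : Integrable (A.indicator Y) P := hY.indicator hAm
  have hcind : Integrable (A.indicator fun _ => y₀) P := (integrable_const y₀).indicator hAm
  have hdecomp : (A.indicator fun ω => Y ω - y₀ - s (Xstar ω))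
      = fun ω => A.indicator Y ω - A.indicator (fun _ => y₀) ω
        - A.indicator (fun ω => s (Xstar ω)) ω := by
    funext ω
    by_cases h : ω ∈ A <;>
      simp [Set.indicator_of_mem, Set.indicator_of_notMem, h]
  rw [hdecomp] at hmean
  beta_reduce at hmean
  have hsubint : Integrable (fun ω => A.indicator Y ω - A.indicator (fun _ => y₀) ω) P :=
    hYind.sub hcind
  rw [integral_sub hsubint hint, integral_sub hYind hcind,
    integral_indicator_const _ hAm] at hmean
  set Is : ℝ := ∫ ω, (A.indicator fun ω => s (Xstar ω)) ω ∂P with hIs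
  set IY : ℝ := ∫ ω, (A.indicator Y) ω ∂P with hIY
  -- strict sign of Is
  set g : Ω → ℝ := fun ω => (-θ) * (A.indicator fun ω => s (Xstar ω)) ω with hg
  have hgnn : 0 ≤ g := by
    intro ω
    simp only [Pi.zero_apply]
    by_cases h : ω ∈ A
    · rcases lt_or_eq_of_le (show Xstar ω ≤ xb from h) with hlt | heq
      · have := hsign _ hlt
        simp only [hg, Set.indicator_of_mem h]
        nlinarith
      · simp [hg, Set.indicator_of_mem h, heq, hsxb]
    · simp [hg, Set.indicator_of_notMem h]
  have hgint : Integrable g P := hint.const_mul (-θ)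
  have hsupp : {ω | Xstar ω < xb} ⊆ Function.support g := by
    intro ω hω
    have hmem : ω ∈ A := le_of_lt (show Xstar ω < xb from hω)
    have := hsign _ hω
    simp only [hg, Function.mem_support, Set.indicator_of_mem hmem]
    intro hcontra
    nlinarith
  have hgpos : 0 < ∫ ω, g ω ∂P := by
    rw [integral_pos_iff_support_of_nonneg hgnn hgint]
    exact lt_of_lt_of_le hplt (measure_mono hsupp)
  have hθIs : 0 < -θ * Is := by
    have : ∫ ω, g ω ∂P = -θ * Is := by
      simp only [hg, hIs]
      rw [integral_const_mul]
    linarith [this ▸ hgpos]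
  -- rewrite the target
  have hIYval : IY = p * y₀ + Is := by
    have : IY - p • y₀ - Is = 0 := hmean
    simp only [smul_eq_mul] at this
    linarith
  have hkey : y₀ - IY / p = -Is / p := by
    rw [hIYval]; field_simp; ring
  rw [hkey]
  rcases hθ with h1 | h1
  · rw [h1] at hθIs ⊢
    have : 0 < -Is / p := by
      apply div_pos _ hp0; linarith
    exact Real.sign_of_pos this
  · rw [h1] at hθIs ⊢
    have : -Is / p < 0 := by
      apply div_neg_of_neg_of_pos _ hp0; linarith
    exact Real.sign_of_neg this
end

section
/- Let (Ω, ℱ, ℙ) be a probability space and let X, W : Ω → ℝ be independent random variables with W integrable. Let s : ℝ → ℝ be measurable with s(X) integrable, and set Y := s(X) + W. Then the conditional expectation of Y given the σ-algebra generated by X satisfies E[Y | σ(X)] = s(X) + E[W] almost surely; consequently Y − E[Y | σ(X)] = W − E[W] almost surely, and Y − E[Y | σ(X)] is independent of X. Conversely, if Y : Ω → ℝ is integrable and μ : ℝ → ℝ is measurable with μ(X) a version of E[Y | σ(X)] and with Y − μ(X) independent of X, then Y = s(X) + W almost surely for the measurable function s := μ and the random variable W := Y − μ(X), which is independent of X.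 -/
open Filter Set Topology MeasureTheory ProbabilityTheory

/-- Additivity–independence equivalence.  Forward direction: if `X` and `W` are independent
with `W` integrable and `s (X)` integrable, then `E[s(X) + W | σ(X)] = s(X) + E[W]` a.s.,
the residual equals `W − E[W]` a.s., and the residual is independent of `X`.  Converse: if
`Y` is integrable, `μfn (X)` is a version of `E[Y | σ(X)]`, and `Y − μfn (X)` is independent
of `X`, then `Y` decomposes a.s. as a measurable function of `X` plus a disturbance
independent of `X`. -/
theorem stmt16 {Ω : Type*} [MeasurableSpace Ω] (P : Measure Ω) [IsProbabilityMeasure P]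
    (X : Ω → ℝ) (hX : Measurable X) :
    (∀ (W : Ω → ℝ) (s : ℝ → ℝ), Measurable W → IndepFun X W P →
      Integrable W P → Measurable s → Integrable (fun ω => s (X ω)) P →
      (P[(fun ω => s (X ω) + W ω)|MeasurableSpace.comap X Real.measurableSpace]
          =ᵐ[P] fun ω => s (X ω) + ∫ ω', W ω' ∂P) ∧
      ((fun ω => (s (X ω) + W ω) -
          (P[(fun ω => s (X ω) + W ω)|MeasurableSpace.comap X Real.measurableSpace]) ω)
          =ᵐ[P] fun ω => W ω - ∫ ω', W ω' ∂P) ∧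
      IndepFun
        (fun ω => (s (X ω) + W ω) -
          (P[(fun ω => s (X ω) + W ω)|MeasurableSpace.comap X Real.measurableSpace]) ω)
        X P) ∧
    (∀ (Y : Ω → ℝ) (μfn : ℝ → ℝ), Integrable Y P → Measurable μfn →
      ((fun ω => μfn (X ω)) =ᵐ[P] P[Y|MeasurableSpace.comap X Real.measurableSpace]) →
      IndepFun (fun ω => Y ω - μfn (X ω)) X P →
      ∃ (s : ℝ → ℝ) (W : Ω → ℝ), Measurable s ∧ IndepFun W X P ∧
        ∀ᵐ ω ∂P, Y ω = s (X ω) + W ω) := by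
  constructor
  · intro W s hW hXW hWint hs hsXint
    have hle : MeasurableSpace.comap X Real.measurableSpace ≤ (by infer_instance) :=
      hX.comap_le
    have hsm : StronglyMeasurable[MeasurableSpace.comap X Real.measurableSpace]
        (fun ω => s (X ω)) :=
      (hs.comp (Measurable.of_comap_le le_rfl)).stronglyMeasurable
    have hWsm : StronglyMeasurable[MeasurableSpace.comap W Real.measurableSpace] W :=
      (Measurable.of_comap_le le_rfl).stronglyMeasurable
    have hindep : Indep (MeasurableSpace.comap W Real.measurableSpace)
        (MeasurableSpace.comap X Real.measurableSpace) P :=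
      (IndepFun_iff_Indep W X P).mp hXW.symm
    have hce : P[(fun ω => s (X ω) + W ω)|MeasurableSpace.comap X Real.measurableSpace]
        =ᵐ[P] fun ω => s (X ω) + ∫ ω', W ω' ∂P := by
      have h1 := condExp_add (μ := P) (m := MeasurableSpace.comap X Real.measurableSpace)
        hsXint hWint
      have h2 : P[(fun ω => s (X ω))|MeasurableSpace.comap X Real.measurableSpace]
          = fun ω => s (X ω) :=
        condExp_of_stronglyMeasurable hle hsm hsXint
      have h3 : P[W|MeasurableSpace.comap X Real.measurableSpace]
          =ᵐ[P] fun _ => ∫ ω', W ω' ∂P :=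
        condExp_indep_eq hW.comap_le hle hWsm hindep
      filter_upwards [h1, h3] with ω h1 h3
      simpa [h2, h3, Pi.add_def] using h1
    refine ⟨hce, ?_, ?_⟩
    · filter_upwards [hce] with ω hω
      rw [hω]; ring
    · have hres : (fun ω => W ω - ∫ ω', W ω' ∂P) =ᵐ[P]
          (fun ω => (s (X ω) + W ω) -
            (P[(fun ω => s (X ω) + W ω)|MeasurableSpace.comap X Real.measurableSpace]) ω) := by
        filter_upwards [hce] with ω hω
        rw [hω]; ring
      have hind : IndepFun (fun ω => W ω - ∫ ω', W ω' ∂P) X P := by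
        have := hXW.symm.comp (φ := fun w : ℝ => w - ∫ ω', W ω' ∂P) (ψ := id)
          (measurable_id.sub measurable_const) measurable_id
        exact this
      exact hind.congr hres Filter.EventuallyEq.rfl
  · intro Y μfn hYint hμ hver hind
    exact ⟨μfn, fun ω => Y ω - μfn (X ω), hμ, hind,
      Filter.Eventually.of_forall fun ω => by ring⟩
end
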